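/- Let G be obtained from a graph G₀ by subdividing every edge exactly twice (replacing each edge by a path with two internal vertices). Then G₀ has an independent set of size k if and only if G has an independent set of size k + |E(G₀)|. -/

import Mathlib

open SimpleGraph Finset

/-- The graph obtained from `G₀` by subdividing every edge exactly twice: each edge
`{u, v}` is replaced by a path `u – (e,u) – (e,v) – v`, where `(e,u)` and `(e,v)` are
the two new internal vertices of the edge `e = {u,v}`. -/
def subdivideTwice {V₀ : Type*} (G₀ : SimpleGraph V₀) :
    SimpleGraph (V₀ ⊕ {p : Sym2 V₀ × V₀ // p.1 ∈ G₀.edgeSet ∧ p.2 ∈ p.1}) :=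
  SimpleGraph.fromRel fun a b =>
    match a, b with
    | Sum.inl u, Sum.inr ⟨(_, w), _⟩ => u = w
    | Sum.inr ⟨(e, u), _⟩, Sum.inr ⟨(e', u'), _⟩ => e = e' ∧ u ≠ u'
    | _, _ => False

section Helpers
variable {V₀ : Type*} {G₀ : SimpleGraph V₀}

lemma st_not_adj_inl_inl (u v : V₀) : ¬ (subdivideTwice G₀).Adj (Sum.inl u) (Sum.inl v) := by
  simp [subdivideTwice, fromRel_adj]

lemma st_adj_inl_inr (u : V₀) (p : {p : Sym2 V₀ × V₀ // p.1 ∈ G₀.edgeSet ∧ p.2 ∈ p.1}) :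
    (subdivideTwice G₀).Adj (Sum.inl u) (Sum.inr p) ↔ u = p.1.2 := by
  obtain ⟨⟨e, w⟩, h⟩ := p
  simp [subdivideTwice, fromRel_adj]

lemma st_adj_inr_inr (p q : {p : Sym2 V₀ × V₀ // p.1 ∈ G₀.edgeSet ∧ p.2 ∈ p.1}) :
    (subdivideTwice G₀).Adj (Sum.inr p) (Sum.inr q) ↔ p.1.1 = q.1.1 ∧ p.1.2 ≠ q.1.2 := by
  obtain ⟨⟨e, w⟩, h⟩ := p
  obtain ⟨⟨e', w'⟩, h'⟩ := q
  simp only [subdivideTwice, fromRel_adj]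
  constructor
  · rintro ⟨hne, (⟨he, hw⟩ | ⟨he, hw⟩)⟩
    · exact ⟨he, hw⟩
    · exact ⟨he.symm, hw.symm⟩
  · rintro ⟨he, hw⟩
    refine ⟨?_, Or.inl ⟨he, hw⟩⟩
    simp only [ne_eq, Sum.inr.injEq, Subtype.mk.injEq, Prod.mk.injEq]
    rintro ⟨-, hww⟩
    exact hw hww

end Helpers

/-- If `G` is obtained from `G₀` by subdividing every edge exactly
twice, then `G₀` has an independent set of size `k` iff `G` has an independent set of
size `k + |E(G₀)|`. -/
theorem subdivideTwice_independent_set_iff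
    {V₀ : Type*} [Fintype V₀] [DecidableEq V₀]
    (G₀ : SimpleGraph V₀) [DecidableRel G₀.Adj] (k : ℕ) :
    (∃ S : Finset V₀, S.card = k ∧ ∀ u ∈ S, ∀ v ∈ S, ¬ G₀.Adj u v) ↔
    (∃ S : Finset (V₀ ⊕ {p : Sym2 V₀ × V₀ // p.1 ∈ G₀.edgeSet ∧ p.2 ∈ p.1}),
        S.card = k + G₀.edgeFinset.card ∧
        ∀ u ∈ S, ∀ v ∈ S, ¬ (subdivideTwice G₀).Adj u v) := by
  classical
  constructor
  · rintro ⟨S₀, hcard, hind⟩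
    have key : ∀ e ∈ G₀.edgeFinset, ∃ w, w ∈ e ∧ w ∉ S₀ := by
      intro e he
      rw [mem_edgeFinset] at he
      induction e with
      | _ u v =>
        rw [SimpleGraph.mem_edgeSet] at he
        by_cases hu : u ∈ S₀
        · exact ⟨v, Sym2.mem_mk_right u v, fun hv => hind u hu v hv he⟩
        · exact ⟨u, Sym2.mem_mk_left u v, hu⟩
    choose w hw hwS using key
    let f : {e // e ∈ G₀.edgeFinset} →
        (V₀ ⊕ {p : Sym2 V₀ × V₀ // p.1 ∈ G₀.edgeSet ∧ p.2 ∈ p.1}) := fun e =>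
      Sum.inr ⟨(e.1, w e.1 e.2), mem_edgeFinset.mp e.2, hw e.1 e.2⟩
    have hfinj : Function.Injective f := by
      intro a b hab
      simp only [f, Sum.inr.injEq, Subtype.mk.injEq, Prod.mk.injEq] at hab
      exact Subtype.ext hab.1
    refine ⟨S₀.image Sum.inl ∪ G₀.edgeFinset.attach.image f, ?_, ?_⟩
    · rw [card_union_of_disjoint ?_]
      · rw [card_image_of_injective _ Sum.inl_injective,
          card_image_of_injective _ hfinj, card_attach, hcard]
      · simp only [Finset.disjoint_left, mem_image]
        rintro x ⟨u, -, rfl⟩ ⟨e, -, h⟩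
        simp [f] at h
    · have hmem : ∀ x ∈ S₀.image Sum.inl ∪ G₀.edgeFinset.attach.image f,
          (∃ u ∈ S₀, x = Sum.inl u) ∨ ∃ e : {e // e ∈ G₀.edgeFinset}, x = f e := by
        intro x hx
        simp only [mem_union, mem_image] at hx
        rcases hx with ⟨u, hu, rfl⟩ | ⟨e, -, rfl⟩
        · exact Or.inl ⟨u, hu, rfl⟩
        · exact Or.inr ⟨e, rfl⟩
      intro a ha b hb hadj
      rcases hmem a ha with ⟨u, hu, rfl⟩ | ⟨e, rfl⟩ <;>
        rcases hmem b hb with ⟨v, hv, rfl⟩ | ⟨e', rfl⟩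
      · exact st_not_adj_inl_inl u v hadj
      · rw [show f e' = Sum.inr ⟨(e'.1, w e'.1 e'.2), mem_edgeFinset.mp e'.2, hw e'.1 e'.2⟩
            from rfl, st_adj_inl_inr] at hadj
        have h2 : u = w e'.1 e'.2 := hadj
        exact hwS e'.1 e'.2 (h2 ▸ hu)
      · rw [show f e = Sum.inr ⟨(e.1, w e.1 e.2), mem_edgeFinset.mp e.2, hw e.1 e.2⟩
            from rfl, adj_comm, st_adj_inl_inr] at hadj
        have h2 : v = w e.1 e.2 := hadj
        exact hwS e.1 e.2 (h2 ▸ hv)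
      · rw [show f e = Sum.inr ⟨(e.1, w e.1 e.2), mem_edgeFinset.mp e.2, hw e.1 e.2⟩ from rfl,
          show f e' = Sum.inr ⟨(e'.1, w e'.1 e'.2), mem_edgeFinset.mp e'.2, hw e'.1 e'.2⟩
            from rfl, st_adj_inr_inr] at hadj
        obtain ⟨hee, hww⟩ := hadj
        simp only at hee hww
        exact hww (by rw [Subtype.ext hee])
  · rintro ⟨S, hScard, hSind⟩
    set P : Sym2 V₀ → Prop := fun e => ∀ v ∈ e, Sum.inl v ∈ S with hP
    set B : Finset (Sym2 V₀) := G₀.edgeFinset.filter P with hB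
    set S₀ : Finset V₀ := Finset.univ.filter (fun u => Sum.inl u ∈ S) with hS₀
    set L := S.filter (fun x => x.isLeft) with hL
    set R := S.filter (fun x => ¬ x.isLeft) with hR
    set g : (V₀ ⊕ {p : Sym2 V₀ × V₀ // p.1 ∈ G₀.edgeSet ∧ p.2 ∈ p.1}) → Sym2 V₀ :=
      Sum.elim (fun u => Sym2.mk u u) (fun p => p.1.1) with hg
    set fib : Sym2 V₀ → ℕ := fun e => (R.filter (fun x => g x = e)).card with hfib
    have hLR : L.card + R.card = S.card := card_filter_add_card_filter_not _
    have hLcard : L.card = S₀.card := by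
      rw [show L = S₀.image Sum.inl from ?_, card_image_of_injective _ Sum.inl_injective]
      ext x
      rcases x with u | p <;> simp [hL, hS₀]
    have hproj : ∀ x ∈ R, g x ∈ G₀.edgeFinset := by
      intro x hx
      rcases x with u | p
      · simp [hR] at hx
      · exact mem_edgeFinset.mpr p.2.1
    have hRcard : R.card = ∑ e ∈ G₀.edgeFinset, fib e :=
      card_eq_sum_card_fiberwise hproj
    have hfib1 : ∀ e ∈ G₀.edgeFinset, fib e ≤ 1 := by
      intro e _
      rw [hfib, card_le_one]
      intro x hx y hy
      simp only [mem_filter, hR] at hx hy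
      obtain ⟨⟨hxS, hxL⟩, hxe⟩ := hx
      obtain ⟨⟨hyS, hyL⟩, hye⟩ := hy
      rcases x with u | ⟨⟨e₁, w₁⟩, h₁⟩
      · simp at hxL
      rcases y with u | ⟨⟨e₂, w₂⟩, h₂⟩
      · simp at hyL
      simp only [hg, Sum.elim_inr] at hxe hye
      subst hxe
      by_cases hww : w₁ = w₂
      · subst hww
        cases hye
        rfl
      · refine absurd ((st_adj_inr_inr _ _).mpr ⟨?_, ?_⟩) (hSind _ hxS _ hyS)
        · exact hye.symm
        · exact hww
    have hfib0 : ∀ e ∈ B, fib e = 0 := by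
      intro e he
      rw [hfib, card_eq_zero, eq_empty_iff_forall_notMem]
      intro x hx
      simp only [mem_filter, hR] at hx
      obtain ⟨⟨hxS, hxL⟩, hxe⟩ := hx
      rcases x with u | ⟨⟨e₁, w₁⟩, h₁⟩
      · simp at hxL
      simp only [hg, Sum.elim_inr] at hxe
      subst hxe
      rw [hB, mem_filter] at he
      have hwS : Sum.inl w₁ ∈ S := he.2 w₁ h₁.2
      exact hSind _ hwS _ hxS ((st_adj_inl_inr _ _).mpr rfl)
    have hsplit : R.card + B.card ≤ G₀.edgeFinset.card := by
      have h1 := Finset.sum_filter_add_sum_filter_not G₀.edgeFinset P fib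
      have h2 : ∑ e ∈ B, fib e = 0 := Finset.sum_eq_zero hfib0
      have h3 : ∑ e ∈ G₀.edgeFinset.filter (fun e => ¬ P e), fib e
          ≤ (G₀.edgeFinset.filter (fun e => ¬ P e)).card := by
        rw [Finset.card_eq_sum_ones]
        exact Finset.sum_le_sum fun e he => hfib1 e (mem_filter.mp he).1
      have h4 := card_filter_add_card_filter_not (s := G₀.edgeFinset) P
      rw [← hB] at h1 h4
      omega
    have hS₀card : k + B.card ≤ S₀.card := by omega
    set T : Finset V₀ := B.image (fun e => (Quot.out e).1) with hT
    have hTcard : T.card ≤ B.card := card_image_le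
    have hsd : k ≤ (S₀ \ T).card := by
      have := Finset.le_card_sdiff T S₀
      omega
    obtain ⟨F, hFsub, hFcard⟩ := Finset.exists_subset_card_eq hsd
    refine ⟨F, hFcard, ?_⟩
    intro u hu v hv hadj
    have hu' := hFsub hu
    have hv' := hFsub hv
    rw [mem_sdiff] at hu' hv'
    have heB : Sym2.mk u v ∈ B := by
      rw [hB, mem_filter]
      refine ⟨mem_edgeFinset.mpr ((SimpleGraph.mem_edgeSet G₀).mpr hadj), ?_⟩
      intro x hx
      rcases Sym2.mem_iff.mp hx with rfl | rfl
      · have := hu'.1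
        rw [hS₀, mem_filter] at this
        exact this.2
      · have := hv'.1
        rw [hS₀, mem_filter] at this
        exact this.2
    have houtT : (Quot.out (Sym2.mk u v)).1 ∈ T := mem_image_of_mem _ heB
    rcases Sym2.mem_iff.mp (Sym2.out_fst_mem (Sym2.mk u v)) with h | h
    · exact hu'.2 (h ▸ houtT)
    · exact hv'.2 (h ▸ houtT)
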